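/- For each integer k with 0 ≤ k ≤ m, the assignments λ_k(a_i)=1, λ_k(b_j)=1, λ_k(c_j)=0, λ_k(d_k)=1, λ_k(e_l)=2, λ_k(f_i)=1 for i≤k and λ_k(f_i)=0 for i>k, and λ_k(g_q)=2 define a group homomorphism λ_k : G → ℤ/4ℤ whose restriction to each finite cyclic subgroup ⟨b_j⟩, ⟨d_k⟩, ⟨e_l⟩, ⟨g_q⟩ is injective; moreover λ_k is surjective if and only if r+s+t+k > 0. -/

import Mathlib

open Monoid

/-- Index type for the factors of the free product `G(r,s,t,m,n)`. -/
abbrev Idx (r s t m n : ℕ) := Fin r ⊕ Fin s ⊕ Fin t ⊕ Fin m ⊕ Fin n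

/-- The factors: `r` copies of `ℤ`, `s` copies of `ℤ/4 × ℤ`, `t` copies of `ℤ/4`,
`m` copies of `ℤ/2 × ℤ`, and `n` copies of `ℤ/2` (written multiplicatively). -/
def Fac (r s t m n : ℕ) : Idx r s t m n → Type
  | .inl _ => Multiplicative ℤ
  | .inr (.inl _) => Multiplicative (ZMod 4 × ℤ)
  | .inr (.inr (.inl _)) => Multiplicative (ZMod 4)
  | .inr (.inr (.inr (.inl _))) => Multiplicative (ZMod 2 × ℤ)
  | .inr (.inr (.inr (.inr _))) => Multiplicative (ZMod 2)

instance (r s t m n : ℕ) : (i : Idx r s t m n) → Group (Fac r s t m n i)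
  | .inl _ => inferInstanceAs (Group (Multiplicative ℤ))
  | .inr (.inl _) => inferInstanceAs (Group (Multiplicative (ZMod 4 × ℤ)))
  | .inr (.inr (.inl _)) => inferInstanceAs (Group (Multiplicative (ZMod 4)))
  | .inr (.inr (.inr (.inl _))) => inferInstanceAs (Group (Multiplicative (ZMod 2 × ℤ)))
  | .inr (.inr (.inr (.inr _))) => inferInstanceAs (Group (Multiplicative (ZMod 2)))

/-- The group `G(r,s,t,m,n)`, the free product of the factors above; this is the orbifold
fundamental group `π₁^orb(V(Γ(v),G(v)))`. -/
abbrev OrbGroup (r s t m n : ℕ) := Monoid.CoprodI (Fac r s t m n)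

variable {r s t m n : ℕ}

/-- The free generator `a_i` of the `i`-th `ℤ` factor. -/
def genA (i : Fin r) : OrbGroup r s t m n :=
  CoprodI.of (show Fac r s t m n (.inl i) from Multiplicative.ofAdd (1 : ℤ))

/-- The order-4 generator `b_j` of the `j`-th `ℤ/4 × ℤ` factor. -/
def genB (j : Fin s) : OrbGroup r s t m n :=
  CoprodI.of (show Fac r s t m n (.inr (.inl j)) from
    Multiplicative.ofAdd ((1, 0) : ZMod 4 × ℤ))

/-- The infinite-order generator `c_j` of the `j`-th `ℤ/4 × ℤ` factor. -/
def genC (j : Fin s) : OrbGroup r s t m n :=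
  CoprodI.of (show Fac r s t m n (.inr (.inl j)) from
    Multiplicative.ofAdd ((0, 1) : ZMod 4 × ℤ))

/-- The order-4 generator `d_k` of the `k`-th `ℤ/4` factor. -/
def genD (k : Fin t) : OrbGroup r s t m n :=
  CoprodI.of (show Fac r s t m n (.inr (.inr (.inl k))) from
    Multiplicative.ofAdd (1 : ZMod 4))

/-- The order-2 generator `e_l` of the `l`-th `ℤ/2 × ℤ` factor. -/
def genE (l : Fin m) : OrbGroup r s t m n :=
  CoprodI.of (show Fac r s t m n (.inr (.inr (.inr (.inl l)))) from
    Multiplicative.ofAdd ((1, 0) : ZMod 2 × ℤ))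

/-- The infinite-order generator `f_l` of the `l`-th `ℤ/2 × ℤ` factor. -/
def genF (l : Fin m) : OrbGroup r s t m n :=
  CoprodI.of (show Fac r s t m n (.inr (.inr (.inr (.inl l)))) from
    Multiplicative.ofAdd ((0, 1) : ZMod 2 × ℤ))

/-- The order-2 generator `g_q` of the `q`-th `ℤ/2` factor. -/
def genG (q : Fin n) : OrbGroup r s t m n :=
  CoprodI.of (show Fac r s t m n (.inr (.inr (.inr (.inr q)))) from
    Multiplicative.ofAdd (1 : ZMod 2))

/-- An automorphism of `G(r,s,t,m,n)` is admissible (the algebraic characterization of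
realizable automorphisms from Lemma 2.2) if it sends each torsion-related generator to a
conjugate of the appropriate normal form. -/
def Admissible (α : OrbGroup r s t m n ≃* OrbGroup r s t m n) : Prop :=
  ∃ (σ : Equiv.Perm (Fin s)) (τ : Equiv.Perm (Fin t)) (γ : Equiv.Perm (Fin m))
    (ξ : Equiv.Perm (Fin n))
    (x : Fin s → OrbGroup r s t m n) (y : Fin t → OrbGroup r s t m n)
    (u : Fin m → OrbGroup r s t m n) (z : Fin n → OrbGroup r s t m n)
    (ε : Fin s → ℤ) (δ : Fin t → ℤ) (ε' : Fin m → ℤ) (δ' : Fin n → ℤ)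
    (v : Fin s → ℕ) (w : Fin m → ℕ),
    (∀ j, ε j = 1 ∨ ε j = -1) ∧ (∀ k, δ k = 1 ∨ δ k = -1) ∧
    (∀ l, ε' l = 1 ∨ ε' l = -1) ∧ (∀ q, δ' q = 1 ∨ δ' q = -1) ∧
    (∀ j, v j < 4) ∧ (∀ l, w l < 2) ∧
    (∀ j, α (genB j) = x j * genB (σ j) ^ ε j * (x j)⁻¹) ∧
    (∀ j, α (genC j) = x j * genB (σ j) ^ v j * genC (σ j) ^ ε j * (x j)⁻¹) ∧
    (∀ k, α (genD k) = y k * genD (τ k) ^ δ k * (y k)⁻¹) ∧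
    (∀ l, α (genE l) = u l * genE (γ l) ^ ε' l * (u l)⁻¹) ∧
    (∀ l, α (genF l) = u l * genE (γ l) ^ w l * genF (γ l) ^ ε' l * (u l)⁻¹) ∧
    (∀ q, α (genG q) = z q * genG (ξ q) ^ δ' q * (z q)⁻¹)

/-- `λ` is "finite injective": its restriction to each finite cyclic subgroup
`⟨b_j⟩`, `⟨d_k⟩`, `⟨e_l⟩`, `⟨g_q⟩` is injective. -/
def InjOnTorsion {r s t m n : ℕ}
    (lam : OrbGroup r s t m n →* Multiplicative (ZMod 4)) : Prop :=
  (∀ j : Fin s, Set.InjOn lam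
    ((Subgroup.zpowers (genB j) : Subgroup (OrbGroup r s t m n)) : Set (OrbGroup r s t m n))) ∧
  (∀ k : Fin t, Set.InjOn lam
    ((Subgroup.zpowers (genD k) : Subgroup (OrbGroup r s t m n)) : Set (OrbGroup r s t m n))) ∧
  (∀ l : Fin m, Set.InjOn lam
    ((Subgroup.zpowers (genE l) : Subgroup (OrbGroup r s t m n)) : Set (OrbGroup r s t m n))) ∧
  (∀ q : Fin n, Set.InjOn lam
    ((Subgroup.zpowers (genG q) : Subgroup (OrbGroup r s t m n)) : Set (OrbGroup r s t m n)))

/-- `λ` takes the normalized values of Lemma 2.4 with parameter `k`: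
`λ(a_i) = λ(b_j) = λ(d_k) = 1`, `λ(c_j) = 0`, `λ(e_l) = λ(g_q) = 2`, and `λ(f_i) = 1`
for the first `k` indices `i`, `λ(f_i) = 0` for the remaining ones. -/
def IsNormalized {r s t m n : ℕ} (k : ℕ)
    (lam : OrbGroup r s t m n →* Multiplicative (ZMod 4)) : Prop :=
  (∀ i : Fin r, lam (genA i) = Multiplicative.ofAdd (1 : ZMod 4)) ∧
  (∀ j : Fin s, lam (genB j) = Multiplicative.ofAdd (1 : ZMod 4)) ∧
  (∀ j : Fin s, lam (genC j) = Multiplicative.ofAdd (0 : ZMod 4)) ∧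
  (∀ k' : Fin t, lam (genD k') = Multiplicative.ofAdd (1 : ZMod 4)) ∧
  (∀ l : Fin m, lam (genE l) = Multiplicative.ofAdd (2 : ZMod 4)) ∧
  (∀ i : Fin m, ((i : ℕ) < k → lam (genF i) = Multiplicative.ofAdd (1 : ZMod 4)) ∧
    (k ≤ (i : ℕ) → lam (genF i) = Multiplicative.ofAdd (0 : ZMod 4))) ∧
  (∀ q : Fin n, lam (genG q) = Multiplicative.ofAdd (2 : ZMod 4))

/-- The doubling map `ZMod 2 →+ ZMod 4`. -/
def two4 : ZMod 2 →+ ZMod 4 where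
  toFun a := 2 * a.val
  map_zero' := by decide
  map_add' := by decide

/-- The factor maps for the normalized homomorphism `λ_k`. -/
def facHom (r s t m n k : ℕ) :
    ∀ i : Idx r s t m n, Fac r s t m n i →* Multiplicative (ZMod 4)
  | .inl _ => show Multiplicative ℤ →* Multiplicative (ZMod 4) from
      AddMonoidHom.toMultiplicative (Int.castAddHom (ZMod 4))
  | .inr (.inl _) => show Multiplicative (ZMod 4 × ℤ) →* Multiplicative (ZMod 4) from
      AddMonoidHom.toMultiplicative (AddMonoidHom.fst (ZMod 4) ℤ)
  | .inr (.inr (.inl _)) => show Multiplicative (ZMod 4) →* Multiplicative (ZMod 4) from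
      AddMonoidHom.toMultiplicative (AddMonoidHom.id (ZMod 4))
  | .inr (.inr (.inr (.inl l))) => show Multiplicative (ZMod 2 × ℤ) →* Multiplicative (ZMod 4) from
      AddMonoidHom.toMultiplicative
      ((two4.comp (AddMonoidHom.fst (ZMod 2) ℤ)) +
        ((if (l : ℕ) < k then Int.castAddHom (ZMod 4) else 0).comp (AddMonoidHom.snd (ZMod 2) ℤ)))
  | .inr (.inr (.inr (.inr _))) => show Multiplicative (ZMod 2) →* Multiplicative (ZMod 4) from
      AddMonoidHom.toMultiplicative two4

lemma injOn_aux {G : Type*} [Group G] (f : G →* Multiplicative (ZMod 4)) (g : G) (c : ℕ)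
    (hg : g ^ (c : ℤ) = 1) (hf : ∀ a b : ℤ, f (g ^ a) = f (g ^ b) → (c : ℤ) ∣ a - b) :
    Set.InjOn f ((Subgroup.zpowers g : Subgroup G) : Set G) := by
  rintro x hx y hy hxy
  obtain ⟨a, rfl⟩ := Subgroup.mem_zpowers_iff.mp hx
  obtain ⟨b, rfl⟩ := Subgroup.mem_zpowers_iff.mp hy
  obtain ⟨q, hq⟩ := hf a b hxy
  have ha : a = b + c * q := by linarith
  rw [ha, zpow_add, zpow_mul, hg, one_zpow, mul_one]

/-- Existence part of the counting argument in Theorem 1.1: for each `k ≤ m` the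
normalized assignments define a group homomorphism `λ_k : G → ℤ/4` which is injective on
each finite cyclic subgroup `⟨b_j⟩`, `⟨d_k⟩`, `⟨e_l⟩`, `⟨g_q⟩`, and `λ_k` is surjective
if and only if `r + s + t + k > 0`. -/
theorem normalized_exists {r s t m n : ℕ} (k : ℕ) (hk : k ≤ m) :
    ∃ lam : OrbGroup r s t m n →* Multiplicative (ZMod 4),
      IsNormalized k lam ∧ InjOnTorsion lam ∧
      (Function.Surjective lam ↔ 0 < r + s + t + k) := by
  classical
  set lam := CoprodI.lift (facHom r s t m n k) with hlam
  have hA : ∀ i : Fin r, lam (genA i) = Multiplicative.ofAdd (1 : ZMod 4) := by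
    intro i
    simp only [genA, hlam, CoprodI.lift_of, facHom]
    rfl
  have hB : ∀ j : Fin s, lam (genB j) = Multiplicative.ofAdd (1 : ZMod 4) := by
    intro j
    simp only [genB, hlam, CoprodI.lift_of, facHom]
    rfl
  have hC : ∀ j : Fin s, lam (genC j) = Multiplicative.ofAdd (0 : ZMod 4) := by
    intro j
    simp only [genC, hlam, CoprodI.lift_of, facHom]
    rfl
  have hD : ∀ k' : Fin t, lam (genD k') = Multiplicative.ofAdd (1 : ZMod 4) := by
    intro k'
    simp only [genD, hlam, CoprodI.lift_of, facHom]
    rfl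
  have hE : ∀ l : Fin m, lam (genE l) = Multiplicative.ofAdd (2 : ZMod 4) := by
    intro l
    rcases Nat.lt_or_ge (l : ℕ) k with h | h
    · rw [genE, hlam, CoprodI.lift_of]
      simp only [facHom, if_pos h]
      rfl
    · rw [genE, hlam, CoprodI.lift_of]
      simp only [facHom, if_neg (Nat.not_lt.mpr h)]
      rfl
  have hF : ∀ i : Fin m,
      (((i : ℕ) < k → lam (genF i) = Multiplicative.ofAdd (1 : ZMod 4)) ∧
        (k ≤ (i : ℕ) → lam (genF i) = Multiplicative.ofAdd (0 : ZMod 4))) := by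
    intro i
    constructor
    · intro hik
      rw [genF, hlam, CoprodI.lift_of]
      simp only [facHom, if_pos hik]
      rfl
    · intro hik
      rw [genF, hlam, CoprodI.lift_of]
      simp only [facHom, if_neg (Nat.not_lt.mpr hik)]
      rfl
  have hG : ∀ q : Fin n, lam (genG q) = Multiplicative.ofAdd (2 : ZMod 4) := by
    intro q
    simp only [genG, hlam, CoprodI.lift_of, facHom]
    rfl
  -- torsion relations
  have hB4 : ∀ j : Fin s, (genB j : OrbGroup r s t m n) ^ ((4 : ℕ) : ℤ) = 1 := by
    intro j
    rw [genB, ← map_zpow]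
    have h1 : (show Fac r s t m n (.inr (.inl j)) from
        Multiplicative.ofAdd ((1, 0) : ZMod 4 × ℤ)) ^ ((4 : ℕ) : ℤ) = 1 := by
      show (Multiplicative.ofAdd ((1, 0) : ZMod 4 × ℤ)) ^ ((4 : ℕ) : ℤ) = 1
      decide
    rw [h1, map_one]
  have hD4 : ∀ k' : Fin t, (genD k' : OrbGroup r s t m n) ^ ((4 : ℕ) : ℤ) = 1 := by
    intro k'
    rw [genD, ← map_zpow]
    have h1 : (show Fac r s t m n (.inr (.inr (.inl k'))) from
        Multiplicative.ofAdd ((1 : ZMod 4))) ^ ((4 : ℕ) : ℤ) = 1 := by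
      show (Multiplicative.ofAdd ((1 : ZMod 4))) ^ ((4 : ℕ) : ℤ) = 1
      decide
    rw [h1, map_one]
  have hE2 : ∀ l : Fin m, (genE l : OrbGroup r s t m n) ^ ((2 : ℕ) : ℤ) = 1 := by
    intro l
    rw [genE, ← map_zpow]
    have h1 : (show Fac r s t m n (.inr (.inr (.inr (.inl l)))) from
        Multiplicative.ofAdd ((1, 0) : ZMod 2 × ℤ)) ^ ((2 : ℕ) : ℤ) = 1 := by
      show (Multiplicative.ofAdd ((1, 0) : ZMod 2 × ℤ)) ^ ((2 : ℕ) : ℤ) = 1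
      decide
    rw [h1, map_one]
  have hG2 : ∀ q : Fin n, (genG q : OrbGroup r s t m n) ^ ((2 : ℕ) : ℤ) = 1 := by
    intro q
    rw [genG, ← map_zpow]
    have h1 : (show Fac r s t m n (.inr (.inr (.inr (.inr q)))) from
        Multiplicative.ofAdd ((1 : ZMod 2))) ^ ((2 : ℕ) : ℤ) = 1 := by
      show (Multiplicative.ofAdd ((1 : ZMod 2))) ^ ((2 : ℕ) : ℤ) = 1
      decide
    rw [h1, map_one]
  -- injectivity helper on values
  have key1 : ∀ (g : OrbGroup r s t m n), lam g = Multiplicative.ofAdd (1 : ZMod 4) →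
      ∀ a b : ℤ, lam (g ^ a) = lam (g ^ b) → ((4 : ℕ) : ℤ) ∣ a - b := by
    intro g hg a b h
    rw [map_zpow, map_zpow, hg] at h
    have h2 : ((a : ZMod 4)) = (b : ZMod 4) := by
      have := congrArg Multiplicative.toAdd h
      simpa [toAdd_zpow, zsmul_eq_mul] using this
    have hd := Int.ModEq.dvd ((ZMod.intCast_eq_intCast_iff _ _ _).mp h2)
    omega
  have key2 : ∀ (g : OrbGroup r s t m n), lam g = Multiplicative.ofAdd (2 : ZMod 4) →
      ∀ a b : ℤ, lam (g ^ a) = lam (g ^ b) → ((2 : ℕ) : ℤ) ∣ a - b := by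
    intro g hg a b h
    rw [map_zpow, map_zpow, hg] at h
    have h2 : (((2 * a : ℤ) : ZMod 4)) = ((2 * b : ℤ) : ZMod 4) := by
      have := congrArg Multiplicative.toAdd h
      simp only [toAdd_zpow, toAdd_ofAdd, zsmul_eq_mul] at this
      push_cast
      rw [mul_comm (2 : ZMod 4) (a : ZMod 4), mul_comm (2 : ZMod 4) (b : ZMod 4)] at *
      convert this using 2 <;> norm_num
    have hd := Int.ModEq.dvd ((ZMod.intCast_eq_intCast_iff _ _ _).mp h2)
    omega
  refine ⟨lam, ⟨hA, hB, hC, hD, hE, hF, hG⟩,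
    ⟨fun j => injOn_aux lam (genB j) 4 (hB4 j) (key1 _ (hB j)),
     fun k' => injOn_aux lam (genD k') 4 (hD4 k') (key1 _ (hD k')),
     fun l => injOn_aux lam (genE l) 2 (hE2 l) (key2 _ (hE l)),
     fun q => injOn_aux lam (genG q) 2 (hG2 q) (key2 _ (hG q))⟩, ?_⟩
  constructor
  · -- surjective → 0 < r + s + t + k
    intro hsurj
    by_contra hlt
    have hr : r = 0 := by omega
    have hs : s = 0 := by omega
    have ht : t = 0 := by omega
    have hk0 : k = 0 := by omega
    have claim : ∀ x : OrbGroup r s t m n,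
        lam x = Multiplicative.ofAdd (0 : ZMod 4) ∨
        lam x = Multiplicative.ofAdd (2 : ZMod 4) := by
      intro x
      induction x using CoprodI.induction_on with
      | one => left; simp
      | of i x =>
        match i with
        | .inl i => exact absurd i.isLt (by omega)
        | .inr (.inl j) => exact absurd j.isLt (by omega)
        | .inr (.inr (.inl k')) => exact absurd k'.isLt (by omega)
        | .inr (.inr (.inr (.inl l))) =>
          simp only [hlam, CoprodI.lift_of, facHom, if_neg (by omega : ¬ (l : ℕ) < k)]
          rcases (by decide : ∀ z : ZMod 2, two4 z = 0 ∨ two4 z = 2)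
            (Multiplicative.toAdd x).1 with h | h
          · left
            simp [AddMonoidHom.toMultiplicative]
            exact h
          · right
            simp [AddMonoidHom.toMultiplicative]
            exact h
        | .inr (.inr (.inr (.inr q))) =>
          simp only [hlam, CoprodI.lift_of, facHom]
          rcases (by decide : ∀ z : ZMod 2, two4 z = 0 ∨ two4 z = 2)
            (Multiplicative.toAdd x) with h | h
          · left
            simp [AddMonoidHom.toMultiplicative]
            exact h
          · right
            simp [AddMonoidHom.toMultiplicative]
            exact h
      | mul x y hx hy =>
        rcases hx with h | h <;> rcases hy with h' | h' <;>
          rw [map_mul, h, h', ← ofAdd_add] <;> decide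
    obtain ⟨x, hx⟩ := hsurj (Multiplicative.ofAdd (1 : ZMod 4))
    rcases claim x with h1 | h1 <;> rw [hx] at h1 <;> exact absurd h1 (by decide)
  · -- 0 < r + s + t + k → surjective
    intro hpos
    have main : ∀ g : OrbGroup r s t m n,
        lam g = Multiplicative.ofAdd (1 : ZMod 4) → Function.Surjective lam := by
      intro g hg y
      obtain ⟨c, hc⟩ := ZMod.natCast_zmod_surjective (n := 4) (Multiplicative.toAdd y)
      refine ⟨g ^ c, ?_⟩
      rw [map_pow, hg, ← ofAdd_nsmul]
      simp [nsmul_eq_mul, hc]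
    by_cases hr : 0 < r
    · exact main (genA ⟨0, hr⟩) (hA _)
    · by_cases hs : 0 < s
      · exact main (genB ⟨0, hs⟩) (hB _)
      · by_cases ht : 0 < t
        · exact main (genD ⟨0, ht⟩) (hD _)
        · have hk0 : 0 < k := by omega
          exact main (genF ⟨0, lt_of_lt_of_le hk0 hk⟩) ((hF _).1 hk0)
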